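/- Let W be a standard Brownian motion on [0,∞). Then P( inf( argsup_{t ∈ pℤ} (W(t) − |t|/2) ) = 0 ) ≥ (1/4)(1 − e^{−p/2})² for any p > 0, where W is extended to a two-sided Brownian motion on ℝ and the supremum is over the lattice pℤ. -/

import Mathlib

open MeasureTheory ProbabilityTheory Real
open scoped NNReal ENNReal

/-- The standard normal cumulative distribution function `Φ`. -/
noncomputable def stdNormalCDF (z : ℝ) : ℝ :=
  ∫ s in Set.Iic z, (Real.sqrt (2 * Real.pi))⁻¹ * Real.exp (-s ^ 2 / 2)

/-- A (one-sided) standard Brownian motion on `[0,∞)`: continuous paths starting at `0`,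
with independent, stationary Gaussian increments of variance `t − s`. -/
structure IsBrownianMotion {Ω : Type*} [MeasurableSpace Ω]
    (P : Measure Ω) (W : ℝ → Ω → ℝ) : Prop where
  meas : ∀ t, Measurable (W t)
  start : ∀ ω, W 0 ω = 0
  cont : ∀ ω, ContinuousOn (fun t => W t ω) (Set.Ici 0)
  gauss_incr : ∀ s t : ℝ, 0 ≤ s → s ≤ t →
    P.map (fun ω => W t ω - W s ω) = gaussianReal 0 (Real.toNNReal (t - s))
  indep_incr : ∀ (n : ℕ) (t : Fin (n + 1) → ℝ), (∀ i, 0 ≤ t i) → Monotone t →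
    iIndepFun
      (fun i : Fin n => fun ω => W (t i.succ) ω - W (t i.castSucc) ω) P

/-- A two-sided standard Brownian motion on `ℝ`: continuous paths starting at `0`, with
independent, stationary Gaussian increments of variance `t − s`. -/
structure IsTwoSidedBM {Ω : Type*} [MeasurableSpace Ω]
    (P : Measure Ω) (W : ℝ → Ω → ℝ) : Prop where
  meas : ∀ t, Measurable (W t)
  start : ∀ ω, W 0 ω = 0
  cont : ∀ ω, Continuous fun t => W t ω
  gauss_incr : ∀ s t : ℝ, s ≤ t →
    P.map (fun ω => W t ω - W s ω) = gaussianReal 0 (Real.toNNReal (t - s))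
  indep_incr : ∀ (n : ℕ) (t : Fin (n + 1) → ℝ), Monotone t →
    iIndepFun
      (fun i : Fin n => fun ω => W (t i.succ) ω - W (t i.castSucc) ω) P

namespace BMAux
open Set

lemma gauss_pdf_exp (v : ℝ≥0) (hv : v ≠ 0) (x : ℝ) :
    Real.exp x * gaussianPDFReal 0 v x = Real.exp (v / 2) * gaussianPDFReal (v : ℝ) v x := by
  have hv' : (v : ℝ) ≠ 0 := by exact_mod_cast hv
  unfold gaussianPDFReal
  rw [mul_left_comm, mul_left_comm (rexp (v / 2)), ← Real.exp_add, ← Real.exp_add]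
  congr 2
  field_simp
  ring

lemma gaussianPDF_eq (v : ℝ≥0) :
    gaussianPDF 0 v = fun x => ((gaussianPDFReal 0 v x).toNNReal : ℝ≥0∞) := rfl

lemma integrable_exp_gaussianReal {v : ℝ≥0} (hv : v ≠ 0) :
    Integrable Real.exp (gaussianReal 0 v) := by
  have hm : Measurable fun x => (gaussianPDFReal 0 v x).toNNReal :=
    measurable_real_toNNReal.comp (measurable_gaussianPDFReal 0 v)
  rw [gaussianReal_of_var_ne_zero _ hv, gaussianPDF_eq,
    integrable_withDensity_iff_integrable_smul hm]
  have heq : (fun x => ((gaussianPDFReal 0 v x).toNNReal : ℝ≥0) • Real.exp x)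
      = fun x => Real.exp ((v : ℝ) / 2) * gaussianPDFReal (v : ℝ) v x := by
    funext x
    rw [NNReal.smul_def, smul_eq_mul, Real.coe_toNNReal _ (gaussianPDFReal_nonneg 0 v x),
      mul_comm, gauss_pdf_exp v hv x]
  rw [heq]
  exact (integrable_gaussianPDFReal _ _).const_mul _

lemma integral_exp_gaussianReal {v : ℝ≥0} (hv : v ≠ 0) :
    ∫ x, Real.exp x ∂(gaussianReal 0 v) = Real.exp ((v : ℝ) / 2) := by
  have hm : Measurable fun x => (gaussianPDFReal 0 v x).toNNReal :=
    measurable_real_toNNReal.comp (measurable_gaussianPDFReal 0 v)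
  rw [gaussianReal_of_var_ne_zero _ hv, gaussianPDF_eq,
    integral_withDensity_eq_integral_smul hm]
  have heq : (fun x => ((gaussianPDFReal 0 v x).toNNReal : ℝ≥0) • Real.exp x)
      = fun x => Real.exp ((v : ℝ) / 2) * gaussianPDFReal (v : ℝ) v x := by
    funext x
    rw [NNReal.smul_def, smul_eq_mul, Real.coe_toNNReal _ (gaussianPDFReal_nonneg 0 v x),
      mul_comm, gauss_pdf_exp v hv x]
  rw [heq, integral_const_mul, integral_gaussianPDFReal_eq_one _ hv, mul_one]

lemma gaussianReal_Iic_zero {v : ℝ≥0} (hv : v ≠ 0) :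
    gaussianReal 0 v (Set.Iic 0) = 1 / 2 := by
  have hmap := gaussianReal_map_const_mul (μ := 0) (v := v) (-1)
  have h1 : ((.mk ((-1 : ℝ) ^ 2) (sq_nonneg _)) : ℝ≥0) = 1 := by ext; norm_num
  rw [h1, one_mul, mul_zero] at hmap
  have hsym : gaussianReal 0 v (Set.Iic 0) = gaussianReal 0 v (Set.Ici 0) := by
    conv_lhs => rw [← hmap]
    rw [Measure.map_apply (by fun_prop) measurableSet_Iic]
    congr 1
    ext x
    simp
  have h0 : gaussianReal 0 v {(0 : ℝ)} = 0 :=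
    gaussianReal_absolutelyContinuous 0 hv (measure_singleton 0)
  have hIci : gaussianReal 0 v (Set.Ici 0) = gaussianReal 0 v (Set.Ioi 0) := by
    have : (Set.Ici (0:ℝ)) = {0} ∪ Set.Ioi 0 := by
      ext x; simp [le_iff_lt_or_eq, or_comm, eq_comm]
    rw [this, measure_union (by simp [Set.disjoint_left]) measurableSet_Ioi, h0, zero_add]
  have htot : gaussianReal 0 v (Set.Iic 0) + gaussianReal 0 v (Set.Ioi 0) = 1 := by
    have hdisj : Disjoint (Set.Iic (0:ℝ)) (Set.Ioi 0) := Set.Iic_disjoint_Ioi le_rfl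
    rw [← measure_union hdisj measurableSet_Ioi, Set.Iic_union_Ioi, measure_univ]
  rw [hsym, hIci] at htot ⊢
  have h2 : (2 : ℝ≥0∞) * gaussianReal 0 v (Set.Ioi 0) = 1 := by rw [two_mul]; exact htot
  rw [ENNReal.eq_div_iff (by norm_num) (by norm_num)]
  exact h2


variable {Ω : Type*} {mΩ : MeasurableSpace Ω} {P : Measure Ω}

lemma indepFun_of_indep_comap {f g : Ω → ℝ}
    (h : Indep (MeasurableSpace.comap f inferInstance) (MeasurableSpace.comap g inferInstance) P) :
    IndepFun f g P := by
  rw [indepFun_iff_measure_inter_preimage_eq_mul]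
  rw [Indep_iff] at h
  intro s t hs ht
  exact h _ _ ⟨s, hs, rfl⟩ ⟨t, ht, rfl⟩

lemma iIndep_comap_of_iIndepFun {ι : Type*} {f : ι → Ω → ℝ}
    (h : iIndepFun f P) :
    iIndep (fun i => MeasurableSpace.comap (f i) inferInstance) P := h

lemma iIndepFun_precomp {ι κ : Type*} [Nonempty ι] {f : κ → Ω → ℝ}
    (g : ι → κ) (hg : Function.Injective g)
    (h : iIndepFun f P) :
    iIndepFun (fun i => f (g i)) P := by
  classical
  rw [iIndepFun_iff_measure_inter_preimage_eq_mul] at h ⊢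
  intro S sets hsets
  have hinv : ∀ i, Function.invFun g (g i) = i := Function.leftInverse_invFun hg
  have key := h (S.image g) (sets := fun j => sets (Function.invFun g j)) ?_
  · have h1 : (⋂ j ∈ S.image g, f j ⁻¹' sets (Function.invFun g j)) =
        ⋂ i ∈ S, f (g i) ⁻¹' sets i := by
      rw [Finset.set_biInter_finset_image]
      exact Set.iInter₂_congr fun i hi => by rw [hinv]
    have h2 : ∏ j ∈ S.image g, P (f j ⁻¹' sets (Function.invFun g j)) =
        ∏ i ∈ S, P (f (g i) ⁻¹' sets i) := by
      rw [Finset.prod_image (fun i _ j _ hij => hg hij)]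
      exact Finset.prod_congr rfl fun i _ => by rw [hinv]
    rw [h1, h2] at key; exact key
  · intro j hj
    obtain ⟨i, hi, rfl⟩ := Finset.mem_image.mp hj
    simpa only [hinv] using hsets i hi


section Maximal

variable {Ω : Type*} {mΩ : MeasurableSpace Ω} (P : Measure Ω) [IsProbabilityMeasure P]

lemma maximal_bound {p : ℝ} (hp : 0 < p) (Z : ℕ → Ω → ℝ)
    (hmeas : ∀ i, Measurable (Z i))
    (hlaw : ∀ i, P.map (Z i) = gaussianReal 0 p.toNNReal)
    (hind : iIndepFun Z P) (m : ℕ) :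
    P {ω | ∃ k, 1 ≤ k ∧ k ≤ m ∧ p / 2 + p * k / 2 ≤ ∑ j ∈ Finset.range k, Z j ω}
      ≤ ENNReal.ofReal (Real.exp (-p / 2)) := by
  classical
  have hv : p.toNNReal ≠ 0 := by
    simp only [ne_eq, Real.toNNReal_eq_zero, not_le]; exact hp
  have hvcoe : ((p.toNNReal : ℝ≥0) : ℝ) = p := Real.coe_toNNReal p hp.le
  -- basic facts about exp (Z i - p/2)
  have hexp_meas : ∀ i, Measurable fun ω => Real.exp (Z i ω - p / 2) := fun i =>
    (measurable_exp.comp ((hmeas i).sub measurable_const))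
  have hexp_int : ∀ i, Integrable (fun ω => Real.exp (Z i ω - p / 2)) P := by
    intro i
    have h1 : Integrable (fun x : ℝ => Real.exp (x - p / 2)) (P.map (Z i)) := by
      rw [hlaw i]
      simp_rw [Real.exp_sub]
      exact (integrable_exp_gaussianReal hv).div_const _
    rw [integrable_map_measure h1.aestronglyMeasurable (hmeas i).aemeasurable] at h1
    · exact h1
  have hexp_val : ∀ i, ∫ ω, Real.exp (Z i ω - p / 2) ∂P = 1 := by
    intro i
    have h1 : Integrable (fun x : ℝ => Real.exp (x - p / 2)) (P.map (Z i)) := by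
      rw [hlaw i]; simp_rw [Real.exp_sub]
      exact (integrable_exp_gaussianReal hv).div_const _
    have h2 : ∫ ω, Real.exp (Z i ω - p / 2) ∂P
        = ∫ x, Real.exp (x - p / 2) ∂(P.map (Z i)) :=
      (integral_map (hmeas i).aemeasurable h1.aestronglyMeasurable).symm
    rw [h2, hlaw i]
    simp_rw [Real.exp_sub]
    rw [integral_div, integral_exp_gaussianReal hv, hvcoe, div_self (Real.exp_pos _).ne']
  -- products over finsets
  have hprod : ∀ s : Finset ℕ, Integrable (fun ω => ∏ j ∈ s, Real.exp (Z j ω - p / 2)) P ∧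
      ∫ ω, ∏ j ∈ s, Real.exp (Z j ω - p / 2) ∂P = 1 := by
    intro s
    induction s using Finset.induction_on with
    | empty => exact ⟨by simpa using (integrable_const (1:ℝ)), by simp⟩
    | insert a s ha ih =>
      have hfg : IndepFun (fun ω => Real.exp (Z a ω - p / 2))
          (fun ω => ∏ j ∈ s, Real.exp (Z j ω - p / 2)) P := by
        apply indepFun_of_indep_comap
        have hbase : Indep (⨆ i ∈ ({a} : Set ℕ), MeasurableSpace.comap (Z i) inferInstance)
            (⨆ i ∈ (s : Set ℕ), MeasurableSpace.comap (Z i) inferInstance) P :=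
          indep_iSup_of_disjoint (fun i => (hmeas i).comap_le)
            (iIndep_comap_of_iIndepFun hind) (by simpa using ha)
        refine indep_of_indep_of_le_left (indep_of_indep_of_le_right hbase ?_) ?_
        · -- comap of product ≤ ⨆ i ∈ s
          apply Measurable.comap_le
          apply Finset.measurable_prod
          intro j hj
          have hZj : Measurable[⨆ i ∈ (s : Set ℕ), MeasurableSpace.comap (Z i) inferInstance]
              (Z j) := Measurable.of_comap_le
            (le_biSup (fun i => MeasurableSpace.comap (Z i) inferInstance) (by exact_mod_cast hj))
          exact measurable_exp.comp (hZj.sub measurable_const)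
        · apply Measurable.comap_le
          rw [iSup_singleton]
          have hZa : Measurable[MeasurableSpace.comap (Z a) inferInstance] (Z a) :=
            Measurable.of_comap_le le_rfl
          exact measurable_exp.comp (hZa.sub measurable_const)
      constructor
      · have := hfg.integrable_mul (hexp_int a) ih.1
        simpa [Finset.prod_insert ha, Pi.mul_def] using this
      · have := hfg.integral_mul_eq_mul_integral (hexp_int a).aestronglyMeasurable ih.1.aestronglyMeasurable
        simp only [Finset.prod_insert ha]
        rw [show (fun ω => Real.exp (Z a ω - p / 2) * ∏ j ∈ s, Real.exp (Z j ω - p / 2))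
          = (fun ω => Real.exp (Z a ω - p / 2)) * (fun ω => ∏ j ∈ s, Real.exp (Z j ω - p / 2))
          from rfl, this, hexp_val a, ih.2, one_mul]
  -- notation
  set S : ℕ → Ω → ℝ := fun k ω => ∑ j ∈ Finset.range k, Z j ω with hS
  set Mk : ℕ → Ω → ℝ := fun k ω => ∏ j ∈ Finset.range k, Real.exp (Z j ω - p / 2) with hMk
  set A : ℕ → Set Ω := fun k =>
    {ω | (p / 2 + p * k / 2 ≤ S k ω) ∧ ∀ j, 1 ≤ j → j < k → S j ω < p / 2 + p * j / 2} with hA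
  have hMk_exp : ∀ k ω, Mk k ω = Real.exp (S k ω - p * k / 2) := by
    intro k ω
    rw [hMk]
    simp only
    rw [← Real.exp_sum]
    congr 1
    rw [Finset.sum_sub_distrib, Finset.sum_const, Finset.card_range, nsmul_eq_mul]
    ring
  -- measurability helpers, parameterized by a sub-σ-algebra
  have hS_meas' : ∀ (m' : MeasurableSpace Ω) (k : ℕ), (∀ j, j < k → Measurable[m'] (Z j)) →
      Measurable[m'] (S k) := fun m' k hZ =>
    Finset.measurable_sum _ (fun j hj => hZ j (Finset.mem_range.mp hj))
  have hMk_meas' : ∀ (m' : MeasurableSpace Ω) (k : ℕ), (∀ j, j < k → Measurable[m'] (Z j)) →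
      Measurable[m'] (Mk k) := fun m' k hZ =>
    Finset.measurable_prod _ (fun j hj =>
      measurable_exp.comp ((hZ j (Finset.mem_range.mp hj)).sub measurable_const))
  have hA_meas' : ∀ (m' : MeasurableSpace Ω) (k : ℕ), (∀ j, j < k → Measurable[m'] (Z j)) →
      MeasurableSet[m'] (A k) := by
    intro m' k hZ
    have hSm : ∀ j, j ≤ k → Measurable[m'] (S j) := fun j hj =>
      hS_meas' m' j (fun i hi => hZ i (lt_of_lt_of_le hi hj))
    have : A k = {ω | p / 2 + p * k / 2 ≤ S k ω} ∩
        ⋂ (j : ℕ) (_ : 1 ≤ j) (_ : j < k), {ω | S j ω < p / 2 + p * j / 2} := by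
      ext ω
      simp only [hA, Set.mem_setOf_eq, Set.mem_inter_iff, Set.mem_iInter]
    rw [this]
    refine MeasurableSet.inter (measurableSet_le measurable_const (hSm k le_rfl)) ?_
    exact MeasurableSet.iInter fun j => MeasurableSet.iInter fun _ =>
      MeasurableSet.iInter fun hj =>
        measurableSet_lt (hSm j hj.le) measurable_const
  have hS_meas : ∀ k, Measurable (S k) := fun k => hS_meas' _ k (fun j _ => hmeas j)
  have hA_meas : ∀ k, MeasurableSet (A k) := fun k => hA_meas' _ k (fun j _ => hmeas j)
  -- the key per-k estimate
  have hkey : ∀ k, 1 ≤ k → k ≤ m →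
      Real.exp (p / 2) * (P (A k)).toReal ≤ ∫ ω in A k, Mk m ω ∂P := by
    intro k h1 hk
    set R : Ω → ℝ := fun ω => ∏ j ∈ Finset.Ico k m, Real.exp (Z j ω - p / 2) with hRdef
    have hsplit : ∀ ω, Mk m ω = Mk k ω * R ω := fun ω =>
      (Finset.prod_range_mul_prod_Ico _ hk).symm
    have hindep : IndepFun (Set.indicator (A k) (Mk k)) R P := by
      apply indepFun_of_indep_comap
      have hbase : Indep (⨆ i ∈ {i : ℕ | i < k}, MeasurableSpace.comap (Z i) inferInstance)
          (⨆ i ∈ {i : ℕ | k ≤ i}, MeasurableSpace.comap (Z i) inferInstance) P :=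
        indep_iSup_of_disjoint (fun i => (hmeas i).comap_le)
          (iIndep_comap_of_iIndepFun hind)
          (by
            apply Set.disjoint_left.mpr
            intro i hi hi2
            simp only [Set.mem_setOf_eq] at hi hi2
            omega)
      refine indep_of_indep_of_le_left (indep_of_indep_of_le_right hbase ?_) ?_
      · apply Measurable.comap_le
        apply Finset.measurable_prod
        intro j hj
        have hZj : Measurable[⨆ i ∈ {i : ℕ | k ≤ i}, MeasurableSpace.comap (Z i) inferInstance]
            (Z j) := Measurable.of_comap_le
          (le_biSup (fun i => MeasurableSpace.comap (Z i) inferInstance)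
            (Finset.mem_Ico.mp hj).1)
        exact measurable_exp.comp (hZj.sub measurable_const)
      · apply Measurable.comap_le
        have hZlt : ∀ j, j < k →
            Measurable[⨆ i ∈ {i : ℕ | i < k}, MeasurableSpace.comap (Z i) inferInstance] (Z j) :=
          fun j hj => Measurable.of_comap_le
            (le_biSup (fun i => MeasurableSpace.comap (Z i) inferInstance) hj)
        exact (hMk_meas' _ k hZlt).indicator (hA_meas' _ k hZlt)
    have hint_ind : Integrable (Set.indicator (A k) (Mk k)) P :=
      ((hprod (Finset.range k)).1).indicator (hA_meas k)
    have hint_R : Integrable R P := (hprod (Finset.Ico k m)).1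
    have hR_val : ∫ ω, R ω ∂P = 1 := (hprod (Finset.Ico k m)).2
    have heq1 : ∫ ω in A k, Mk m ω ∂P = ∫ ω, Set.indicator (A k) (Mk m) ω ∂P :=
      (integral_indicator (hA_meas k)).symm
    have heq2 : Set.indicator (A k) (Mk m) = Set.indicator (A k) (Mk k) * R := by
      funext ω
      simp only [Pi.mul_apply]
      by_cases hω : ω ∈ A k
      · rw [Set.indicator_of_mem hω, Set.indicator_of_mem hω, hsplit ω]
      · rw [Set.indicator_of_notMem hω, Set.indicator_of_notMem hω, zero_mul]
    have heq3 : ∫ ω, (Set.indicator (A k) (Mk k) * R) ω ∂P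
        = ∫ ω, Set.indicator (A k) (Mk k) ω ∂P := by
      rw [hindep.integral_mul_eq_mul_integral hint_ind.aestronglyMeasurable hint_R.aestronglyMeasurable, hR_val, mul_one]
    have hlb : Real.exp (p / 2) * (P (A k)).toReal
        ≤ ∫ ω, Set.indicator (A k) (Mk k) ω ∂P := by
      have hmono : ∀ ω, Set.indicator (A k) (fun _ => Real.exp (p / 2)) ω
          ≤ Set.indicator (A k) (Mk k) ω := by
        intro ω
        by_cases hω : ω ∈ A k
        · rw [Set.indicator_of_mem hω, Set.indicator_of_mem hω, hMk_exp]
          refine Real.exp_le_exp.mpr ?_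
          have h1' := hω.1
          linarith
        · rw [Set.indicator_of_notMem hω, Set.indicator_of_notMem hω]
      have hconst : ∫ ω, Set.indicator (A k) (fun _ => Real.exp (p / 2)) ω ∂P
          = Real.exp (p / 2) * (P (A k)).toReal := by
        rw [integral_indicator_const _ (hA_meas k), smul_eq_mul, mul_comm, measureReal_def]
      rw [← hconst]
      exact integral_mono ((integrable_const _).indicator (hA_meas k)) hint_ind hmono
    rw [heq1, heq2, heq3]
    exact hlb
  -- disjointness
  have hdisj : (↑(Finset.Icc 1 m) : Set ℕ).PairwiseDisjoint A := by
    intro k hk l hl hkl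
    simp only [Finset.coe_Icc, Set.mem_Icc] at hk hl
    apply Set.disjoint_left.mpr
    intro ω hωk hωl
    rcases lt_or_gt_of_ne hkl with h | h
    · exact absurd hωk.1 (not_le.mpr (hωl.2 k hk.1 h))
    · exact absurd hωl.1 (not_le.mpr (hωk.2 l hl.1 h))
  -- union identity
  have hunion : {ω | ∃ k, 1 ≤ k ∧ k ≤ m ∧ p / 2 + p * k / 2 ≤ ∑ j ∈ Finset.range k, Z j ω}
      = ⋃ k ∈ Finset.Icc 1 m, A k := by
    ext ω
    simp only [Set.mem_setOf_eq, Set.mem_iUnion, Finset.mem_Icc, exists_prop]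
    constructor
    · rintro hex0
      have hex : ∃ k, 1 ≤ k ∧ k ≤ m ∧ p / 2 + p * k / 2 ≤ S k ω := hex0
      obtain ⟨h01, h02, h03⟩ := Nat.find_spec hex
      refine ⟨Nat.find hex, ⟨h01, h02⟩, h03, ?_⟩
      intro j hj1 hjk
      by_contra hcon
      push_neg at hcon
      exact Nat.find_min hex hjk ⟨hj1, le_trans hjk.le h02, hcon⟩
    · rintro ⟨k, hk, h1, _⟩
      exact ⟨k, hk.1, hk.2, h1⟩
  -- summation
  have hsum_meas : P {ω | ∃ k, 1 ≤ k ∧ k ≤ m ∧ p / 2 + p * k / 2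
      ≤ ∑ j ∈ Finset.range k, Z j ω} = ∑ k ∈ Finset.Icc 1 m, P (A k) := by
    rw [hunion, measure_biUnion_finset hdisj (fun k _ => hA_meas k)]
  have hsum_int : ∑ k ∈ Finset.Icc 1 m, ∫ ω in A k, Mk m ω ∂P
      = ∫ ω in (⋃ k ∈ Finset.Icc 1 m, A k), Mk m ω ∂P :=
    (integral_biUnion_finset _ (fun k _ => hA_meas k) hdisj
      (fun k _ => (hprod (Finset.range m)).1.integrableOn)).symm
  have hle_one : ∫ ω in (⋃ k ∈ Finset.Icc 1 m, A k), Mk m ω ∂P ≤ 1 := by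
    rw [← (hprod (Finset.range m)).2]
    exact setIntegral_le_integral (hprod (Finset.range m)).1
      (ae_of_all _ fun ω => Finset.prod_nonneg fun j _ => (Real.exp_pos _).le)
  have hchain : Real.exp (p / 2) * ∑ k ∈ Finset.Icc 1 m, (P (A k)).toReal ≤ 1 := by
    rw [Finset.mul_sum]
    calc ∑ k ∈ Finset.Icc 1 m, Real.exp (p / 2) * (P (A k)).toReal
        ≤ ∑ k ∈ Finset.Icc 1 m, ∫ ω in A k, Mk m ω ∂P :=
          Finset.sum_le_sum fun k hk =>
            hkey k (Finset.mem_Icc.mp hk).1 (Finset.mem_Icc.mp hk).2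
      _ = ∫ ω in (⋃ k ∈ Finset.Icc 1 m, A k), Mk m ω ∂P := hsum_int
      _ ≤ 1 := hle_one
  have htoReal : (P {ω | ∃ k, 1 ≤ k ∧ k ≤ m ∧ p / 2 + p * k / 2
      ≤ ∑ j ∈ Finset.range k, Z j ω}).toReal = ∑ k ∈ Finset.Icc 1 m, (P (A k)).toReal := by
    rw [hsum_meas, ENNReal.toReal_sum (fun k _ => measure_ne_top P _)]
  rw [← ENNReal.ofReal_toReal (measure_ne_top P _)]
  apply ENNReal.ofReal_le_ofReal
  rw [htoReal]
  rw [show -p / 2 = -(p / 2) by ring, Real.exp_neg, inv_eq_one_div, le_div_iff₀ (Real.exp_pos _)]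
  linarith [hchain]

lemma oneside_bound {p : ℝ} (hp : 0 < p) (Z : ℕ → Ω → ℝ)
    (hmeas : ∀ i, Measurable (Z i))
    (hlaw : ∀ i, P.map (Z i) = gaussianReal 0 p.toNNReal)
    (hind : iIndepFun Z P) :
    ENNReal.ofReal ((1 - Real.exp (-p / 2)) / 2)
      ≤ P {ω | ∀ k : ℕ, 1 ≤ k → ∑ j ∈ Finset.range k, Z j ω < p * k / 2} := by
  classical
  have hv : p.toNNReal ≠ 0 := by
    simp only [ne_eq, Real.toNNReal_eq_zero, not_le]; exact hp
  set T : ℕ → Ω → ℝ := fun k ω => ∑ j ∈ Finset.range k, Z (j + 1) ω with hT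
  set G₁ : Set Ω := {ω | Z 0 ω ≤ 0} with hG₁
  set G₂ : Set Ω := {ω | ∀ k : ℕ, 1 ≤ k → T k ω < p / 2 + p * k / 2} with hG₂
  -- inclusion
  have hsub : G₁ ∩ G₂ ⊆ {ω | ∀ k : ℕ, 1 ≤ k → ∑ j ∈ Finset.range k, Z j ω < p * k / 2} := by
    rintro ω ⟨h1, h2⟩ k hk
    obtain ⟨n, rfl⟩ : ∃ n, k = n + 1 := ⟨k - 1, by omega⟩
    rw [Finset.sum_range_succ']
    have hTn : T n ω < p / 2 + p * n / 2 := by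
      rcases Nat.eq_zero_or_pos n with hn | hn
      · subst hn
        simp only [hT, Finset.range_zero, Finset.sum_empty]
        positivity
      · exact h2 n hn
    have h1' : Z 0 ω ≤ 0 := h1
    have : ((n : ℝ) + 1) = ((n + 1 : ℕ) : ℝ) := by push_cast; ring
    push_cast
    rw [hT] at hTn
    simp only at hTn
    linarith
  -- measurability of G₂
  have hT_meas' : ∀ (m' : MeasurableSpace Ω), (∀ j, 1 ≤ j → Measurable[m'] (Z j)) →
      ∀ k, Measurable[m'] (T k) := fun m' hZ k =>
    Finset.measurable_sum _ (fun j _ => hZ (j + 1) (by omega))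
  have hG₂_eq : G₂ = ⋂ (k : ℕ) (_ : 1 ≤ k), {ω | T k ω < p / 2 + p * k / 2} := by
    ext ω; simp only [hG₂, Set.mem_setOf_eq, Set.mem_iInter]
  have hG₂_meas' : ∀ (m' : MeasurableSpace Ω), (∀ j, 1 ≤ j → Measurable[m'] (Z j)) →
      MeasurableSet[m'] G₂ := by
    intro m' hZ
    rw [hG₂_eq]
    exact MeasurableSet.iInter fun k => MeasurableSet.iInter fun _ =>
      measurableSet_lt (hT_meas' m' hZ k) measurable_const
  have hG₂_meas : MeasurableSet G₂ := hG₂_meas' _ (fun j _ => hmeas j)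
  -- independence of G₁ and G₂
  have hbase : Indep (⨆ i ∈ ({0} : Set ℕ), MeasurableSpace.comap (Z i) inferInstance)
      (⨆ i ∈ {i : ℕ | 1 ≤ i}, MeasurableSpace.comap (Z i) inferInstance) P :=
    indep_iSup_of_disjoint (fun i => (hmeas i).comap_le)
      (iIndep_comap_of_iIndepFun hind)
      (by
        apply Set.disjoint_left.mpr
        intro i hi hi2
        simp only [Set.mem_setOf_eq, Set.mem_singleton_iff] at hi hi2
        omega)
  have hindep12 : P (G₁ ∩ G₂) = P G₁ * P G₂ := by
    rw [Indep_iff] at hbase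
    apply hbase
    · rw [iSup_singleton]
      exact ⟨Set.Iic 0, measurableSet_Iic, rfl⟩
    · apply hG₂_meas'
      intro j hj
      exact Measurable.of_comap_le
        (le_biSup (fun i => MeasurableSpace.comap (Z i) inferInstance) hj)
  -- P G₁ = 1/2
  have hPG₁ : P G₁ = 1 / 2 := by
    have : G₁ = Z 0 ⁻¹' Set.Iic 0 := rfl
    rw [this, ← Measure.map_apply (hmeas 0) measurableSet_Iic, hlaw 0,
      gaussianReal_Iic_zero hv]
  -- P G₂ ≥ 1 - exp(-p/2)
  have hZ'_law : ∀ i : ℕ, P.map (fun ω => Z (i + 1) ω) = gaussianReal 0 p.toNNReal :=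
    fun i => hlaw (i + 1)
  have hZ'_ind : iIndepFun (fun j : ℕ => Z (j + 1)) P :=
    iIndepFun_precomp (fun j : ℕ => j + 1) (fun a b h => by simpa using h) hind
  have hbad : ∀ m : ℕ, P {ω | ∃ k, 1 ≤ k ∧ k ≤ m ∧ p / 2 + p * k / 2 ≤ T k ω}
      ≤ ENNReal.ofReal (Real.exp (-p / 2)) := fun m =>
    maximal_bound P hp (fun j => Z (j + 1)) (fun j => hmeas (j + 1)) hZ'_law hZ'_ind m
  have hcompl : G₂ᶜ = ⋃ m : ℕ, {ω | ∃ k, 1 ≤ k ∧ k ≤ m ∧ p / 2 + p * k / 2 ≤ T k ω} := by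
    ext ω
    simp only [hG₂, Set.mem_compl_iff, Set.mem_setOf_eq, Set.mem_iUnion]
    push_neg
    constructor
    · rintro ⟨k, hk, hle⟩
      exact ⟨k, k, hk, le_rfl, hle⟩
    · rintro ⟨m, k, h1, _, h3⟩
      exact ⟨k, h1, h3⟩
  have hPG₂c : P G₂ᶜ ≤ ENNReal.ofReal (Real.exp (-p / 2)) := by
    rw [hcompl]
    have hmono : Monotone fun m : ℕ => {ω | ∃ k, 1 ≤ k ∧ k ≤ m ∧ p / 2 + p * k / 2 ≤ T k ω} := by
      intro a b hab ω
      rintro ⟨k, h1, h2, h3⟩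
      exact ⟨k, h1, h2.trans hab, h3⟩
    rw [Directed.measure_iUnion hmono.directed_le]
    exact iSup_le hbad
  have hPG₂ : ENNReal.ofReal (1 - Real.exp (-p / 2)) ≤ P G₂ := by
    have h1 : P G₂ = 1 - P G₂ᶜ :=
      ENNReal.eq_sub_of_add_eq (measure_ne_top _ _) (by rw [measure_add_measure_compl hG₂_meas, measure_univ])
    rw [h1, ENNReal.ofReal_sub _ (Real.exp_pos _).le, ENNReal.ofReal_one]
    exact tsub_le_tsub_left hPG₂c 1
  -- conclusion
  calc ENNReal.ofReal ((1 - Real.exp (-p / 2)) / 2)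
      = ENNReal.ofReal (1 / 2) * ENNReal.ofReal (1 - Real.exp (-p / 2)) := by
        rw [← ENNReal.ofReal_mul (by norm_num)]
        ring_nf
    _ ≤ P G₁ * P G₂ := by
        apply mul_le_mul'
        · rw [hPG₁]
          rw [ENNReal.ofReal_div_of_pos (by norm_num), ENNReal.ofReal_one,
            ENNReal.ofReal_ofNat]
        · exact hPG₂
    _ = P (G₁ ∩ G₂) := hindep12.symm
    _ ≤ P {ω | ∀ k : ℕ, 1 ≤ k → ∑ j ∈ Finset.range k, Z j ω < p * k / 2} :=
        measure_mono hsub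

end Maximal

section BM

variable {Ω : Type*} {mΩ : MeasurableSpace Ω} (P : Measure Ω) [IsProbabilityMeasure P]

-- increment family of a two-sided BM over the lattice pℤ, as a ℤ-indexed family
lemma twoSided_incr_indep {W : ℝ → Ω → ℝ}
    (hW : ∀ t, Measurable (W t))
    (hincr : ∀ (n : ℕ) (t : Fin (n + 1) → ℝ), Monotone t →
      iIndepFun
        (fun i : Fin n => fun ω => W (t i.succ) ω - W (t i.castSucc) ω) P)
    {p : ℝ} (hp : 0 < p) :
    iIndepFun
      (fun i : ℤ => fun ω => W (p * ((i : ℝ) + 1)) ω - W (p * (i : ℝ)) ω) P := by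
  classical
  rw [iIndepFun_iff_measure_inter_preimage_eq_mul]
  intro S sets hsets
  set D : ℤ → Ω → ℝ := fun i => fun ω => W (p * ((i : ℝ) + 1)) ω - W (p * (i : ℝ)) ω with hD
  set n : ℕ := S.sup (fun s => s.natAbs) + 1 with hn_def
  have hn : ∀ s ∈ S, s.natAbs < n := fun s hs =>
    Nat.lt_succ_of_le (Finset.le_sup hs)
  have hn1 : 1 ≤ n := Nat.le_add_left 1 _
  set t : Fin (2 * n + 1) → ℝ := fun i => p * ((i : ℕ) - (n : ℝ)) with ht_def
  have ht : Monotone t := by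
    intro i j hij
    have : ((i : ℕ) : ℝ) ≤ ((j : ℕ) : ℝ) := by exact_mod_cast (Fin.le_iff_val_le_val.mp hij)
    simp only [ht_def]
    apply mul_le_mul_of_nonneg_left (by linarith) hp.le
  have hF := hincr (2 * n) t ht
  rw [iIndepFun_iff_measure_inter_preimage_eq_mul] at hF
  set g : ℤ → Fin (2 * n) := fun s =>
    ⟨min (s + n).toNat (2 * n - 1), lt_of_le_of_lt (min_le_right _ _) (by omega)⟩ with hg_def
  have hg_coe : ∀ s ∈ S, ((g s : ℕ) : ℤ) = s + n := by
    intro s hs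
    have h1 := hn s hs
    show ((min (s + (n : ℤ)).toNat (2 * n - 1) : ℕ) : ℤ) = s + n
    omega
  have hg_inj : ∀ a ∈ S, ∀ b ∈ S, g a = g b → a = b := by
    intro a ha b hb hab
    have h1 := hg_coe a ha
    have h2 := hg_coe b hb
    rw [hab, h2] at h1
    omega
  have hFD : ∀ s ∈ S, (fun ω => W (t (g s).succ) ω - W (t (g s).castSucc) ω) = D s := by
    intro s hs
    funext ω
    have hc : ((g s : ℕ) : ℝ) = (s : ℝ) + n := by exact_mod_cast hg_coe s hs
    have h1 : (((g s).succ : ℕ) : ℝ) = ((g s : ℕ) : ℝ) + 1 := by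
      rw [Fin.val_succ]; push_cast; ring
    have hsucc : t ((g s).succ) = p * ((s : ℝ) + 1) := by
      show p * ((((g s).succ : ℕ) : ℝ) - n) = p * ((s : ℝ) + 1)
      rw [h1, hc]; ring
    have hcast : t ((g s).castSucc) = p * (s : ℝ) := by
      show p * ((((g s).castSucc : ℕ) : ℝ) - n) = p * (s : ℝ)
      rw [Fin.coe_castSucc, hc]; ring
    rw [hsucc, hcast]
  have key := hF (S.image g) (sets := fun j => sets (((j : ℕ) : ℤ) - n)) ?_
  · have hidx : ∀ s ∈ S, (((g s : ℕ) : ℤ) - n) = s := by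
      intro s hs; rw [hg_coe s hs]; ring
    have h1 : (⋂ j ∈ S.image g,
          (fun ω => W (t j.succ) ω - W (t j.castSucc) ω) ⁻¹' sets (((j : ℕ) : ℤ) - n))
        = ⋂ s ∈ S, D s ⁻¹' sets s := by
      rw [Finset.set_biInter_finset_image]
      apply Set.iInter₂_congr
      intro s hs
      rw [hidx s hs, hFD s hs]
    have h2 : ∏ j ∈ S.image g,
          P ((fun ω => W (t j.succ) ω - W (t j.castSucc) ω) ⁻¹' sets (((j : ℕ) : ℤ) - n))
        = ∏ s ∈ S, P (D s ⁻¹' sets s) := by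
      rw [Finset.prod_image hg_inj]
      apply Finset.prod_congr rfl
      intro s hs
      rw [hidx s hs, hFD s hs]
    rw [h1, h2] at key
    exact key
  · intro j hj
    obtain ⟨s, hs, rfl⟩ := Finset.mem_image.mp hj
    have := hg_coe s hs
    have h1 : (((g s : ℕ) : ℤ) - n) = s := by rw [this]; ring
    simpa only [h1] using hsets s hs

end BM
end BMAux

open BMAux in
/-- For a two-sided standard Brownian motion `W` and `p > 0`, the probability that the
smallest maximizer over the lattice `pℤ` of `t ↦ W(t) − |t|/2` is `0` is at least
`¼(1 − e^{−p/2})²`. -/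
theorem prob_argsup_lattice_zero {Ω : Type*} [MeasurableSpace Ω]
    (P : Measure Ω) [IsProbabilityMeasure P]
    (W : ℝ → Ω → ℝ) (hBM : IsTwoSidedBM P W) (p : ℝ) (hp : 0 < p) :
    ENNReal.ofReal ((1 / 4) * (1 - Real.exp (-p / 2)) ^ 2) ≤
      P {ω | sInf {t : ℝ | (∃ k : ℤ, t = p * k) ∧
          ∀ s : ℤ, W (p * s) ω - |p * s| / 2 ≤ W t ω - |t| / 2} = 0} := by
  classical
  set D : ℤ → Ω → ℝ := fun i => fun ω => W (p * ((i : ℝ) + 1)) ω - W (p * (i : ℝ)) ω with hD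
  have hD_meas : ∀ i, Measurable (D i) := fun i => (hBM.meas _).sub (hBM.meas _)
  have hD_law : ∀ i : ℤ, P.map (D i) = gaussianReal 0 p.toNNReal := by
    intro i
    have hle : p * (i : ℝ) ≤ p * ((i : ℝ) + 1) :=
      mul_le_mul_of_nonneg_left (by linarith) hp.le
    have := hBM.gauss_incr (p * (i : ℝ)) (p * ((i : ℝ) + 1)) hle
    rw [show p * ((i : ℝ) + 1) - p * (i : ℝ) = p by ring] at this
    exact this
  have hD_indep : iIndepFun D P :=
    twoSided_incr_indep P hBM.meas hBM.indep_incr hp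
  -- positive and negative increment sequences
  set Zpos : ℕ → Ω → ℝ := fun j => D (j : ℤ) with hZpos
  set Zneg : ℕ → Ω → ℝ := fun j => fun ω => -D (-1 - (j : ℤ)) ω with hZneg
  have hZpos_meas : ∀ j, Measurable (Zpos j) := fun j => hD_meas _
  have hZneg_meas : ∀ j, Measurable (Zneg j) := fun j => (hD_meas _).neg
  have hZpos_law : ∀ j : ℕ, P.map (Zpos j) = gaussianReal 0 p.toNNReal := fun j => hD_law _
  have hZneg_law : ∀ j : ℕ, P.map (Zneg j) = gaussianReal 0 p.toNNReal := by
    intro j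
    have h1 : ((.mk ((-1 : ℝ) ^ 2) (sq_nonneg _)) : ℝ≥0) = 1 := by ext; norm_num
    have hmm : P.map (Zneg j) = (P.map (D (-1 - (j : ℤ)))).map (fun x : ℝ => -1 * x) := by
      rw [Measure.map_map (by fun_prop) (hD_meas _)]
      congr 1
      funext ω
      show Zneg j ω = -1 * D (-1 - (j : ℤ)) ω
      rw [hZneg]; simp only; ring
    rw [hmm, hD_law, gaussianReal_map_const_mul, h1, one_mul, mul_zero]
  have hZpos_ind : iIndepFun Zpos P :=
    iIndepFun_precomp (fun j : ℕ => (j : ℤ)) (fun a b h => by simpa using h) hD_indep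
  have hZneg_ind : iIndepFun Zneg P := by
    have h1 : iIndepFun (fun j : ℕ => D (-1 - (j : ℤ))) P :=
      iIndepFun_precomp (fun j : ℕ => -1 - (j : ℤ))
        (fun a b h => by simp only at h; omega) hD_indep
    have h2 := h1.comp (fun _ => fun x : ℝ => -x) (fun _ => measurable_neg)
    exact h2
  -- one-sided bounds
  have hGp := oneside_bound P hp Zpos hZpos_meas hZpos_law hZpos_ind
  have hGn := oneside_bound P hp Zneg hZneg_meas hZneg_law hZneg_ind
  set Gp : Set Ω := {ω | ∀ k : ℕ, 1 ≤ k → ∑ j ∈ Finset.range k, Zpos j ω < p * k / 2} with hGpdef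
  set Gn : Set Ω := {ω | ∀ k : ℕ, 1 ≤ k → ∑ j ∈ Finset.range k, Zneg j ω < p * k / 2} with hGndef
  -- telescoping sums
  have hsum_pos : ∀ (k : ℕ) (ω : Ω), ∑ j ∈ Finset.range k, Zpos j ω = W (p * k) ω := by
    intro k ω
    have hts := Finset.sum_range_sub (f := fun j : ℕ => W (p * (j : ℝ)) ω) k
    push_cast at hts
    rw [mul_zero, hBM.start, sub_zero] at hts
    have hterm : ∀ j ∈ Finset.range k,
        Zpos j ω = W (p * ((j : ℕ) + 1 : ℝ)) ω - W (p * (j : ℝ)) ω := by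
      intro j _
      rw [hZpos, hD]
      simp only
      push_cast
      ring_nf
    rw [Finset.sum_congr rfl hterm, hts]
  have hsum_neg : ∀ (k : ℕ) (ω : Ω), ∑ j ∈ Finset.range k, Zneg j ω = W (-(p * k)) ω := by
    intro k ω
    have hts := Finset.sum_range_sub (f := fun j : ℕ => W (-(p * (j : ℝ))) ω) k
    push_cast at hts
    rw [mul_zero, neg_zero, hBM.start, sub_zero] at hts
    have hterm : ∀ j ∈ Finset.range k,
        Zneg j ω = W (-(p * ((j : ℕ) + 1 : ℝ))) ω - W (-(p * (j : ℝ))) ω := by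
      intro j _
      rw [hZneg, hD]
      simp only
      push_cast
      ring_nf
    rw [Finset.sum_congr rfl hterm, hts]
  -- independence of the two sides
  have hGpGn : P (Gp ∩ Gn) = P Gp * P Gn := by
    have hbase : Indep (⨆ i ∈ {i : ℤ | 0 ≤ i}, MeasurableSpace.comap (D i) inferInstance)
        (⨆ i ∈ {i : ℤ | i < 0}, MeasurableSpace.comap (D i) inferInstance) P :=
      indep_iSup_of_disjoint (fun i => (hD_meas i).comap_le)
        (iIndep_comap_of_iIndepFun hD_indep)
        (by
          apply Set.disjoint_left.mpr
          intro i hi hi2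
          simp only [Set.mem_setOf_eq] at hi hi2
          omega)
    rw [Indep_iff] at hbase
    apply hbase
    · -- Gp measurable w.r.t. positive increments
      have hmeas' : ∀ j : ℕ,
          Measurable[⨆ i ∈ {i : ℤ | 0 ≤ i}, MeasurableSpace.comap (D i) inferInstance]
            (Zpos j) := fun j => Measurable.of_comap_le
        (le_biSup (fun i => MeasurableSpace.comap (D i) inferInstance)
          (Int.natCast_nonneg j))
      have : Gp = ⋂ (k : ℕ) (_ : 1 ≤ k),
          {ω | ∑ j ∈ Finset.range k, Zpos j ω < p * k / 2} := by
        ext ω; simp only [hGpdef, Set.mem_setOf_eq, Set.mem_iInter]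
      rw [this]
      exact MeasurableSet.iInter fun k => MeasurableSet.iInter fun _ =>
        measurableSet_lt (Finset.measurable_sum _ fun j _ => hmeas' j) measurable_const
    · have hmeas' : ∀ j : ℕ,
          Measurable[⨆ i ∈ {i : ℤ | i < 0}, MeasurableSpace.comap (D i) inferInstance]
            (Zneg j) := by
        intro j
        have hmem : (-1 - (j : ℤ)) ∈ {i : ℤ | i < 0} := by
          simp only [Set.mem_setOf_eq]
          have : (0 : ℤ) ≤ (j : ℤ) := Int.natCast_nonneg j
          omega
        exact (Measurable.of_comap_le
          (le_biSup (fun i => MeasurableSpace.comap (D i) inferInstance) hmem)).neg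
      have : Gn = ⋂ (k : ℕ) (_ : 1 ≤ k),
          {ω | ∑ j ∈ Finset.range k, Zneg j ω < p * k / 2} := by
        ext ω; simp only [hGndef, Set.mem_setOf_eq, Set.mem_iInter]
      rw [this]
      exact MeasurableSet.iInter fun k => MeasurableSet.iInter fun _ =>
        measurableSet_lt (Finset.measurable_sum _ fun j _ => hmeas' j) measurable_const
  -- the good event implies the argsup is {0}
  have hincl : Gp ∩ Gn ⊆ {ω | sInf {t : ℝ | (∃ k : ℤ, t = p * k) ∧
      ∀ s : ℤ, W (p * s) ω - |p * s| / 2 ≤ W t ω - |t| / 2} = 0} := by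
    rintro ω ⟨hgp, hgn⟩
    have key1 : ∀ k : ℤ, k ≠ 0 → W (p * k) ω - |p * (k : ℝ)| / 2 < 0 := by
      intro k hk
      rcases lt_or_gt_of_ne hk with hneg | hpos
      · -- k < 0
        set m : ℕ := (-k).toNat with hm
        have hm1 : 1 ≤ m := by omega
        have hmk : ((m : ℤ) : ℝ) = -(k : ℝ) := by
          have : (m : ℤ) = -k := by omega
          exact_mod_cast this
        have hcast : ((m : ℕ) : ℝ) = -(k : ℝ) := by exact_mod_cast hmk
        have h2 := hgn m hm1
        rw [hsum_neg m ω] at h2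
        have habs : |p * (k : ℝ)| = p * (m : ℝ) := by
          rw [abs_of_nonpos (by nlinarith [hcast, show (1:ℝ) ≤ (m:ℝ) by exact_mod_cast hm1])]
          rw [hcast]; ring
        have harg : -(p * (m : ℝ)) = p * (k : ℝ) := by rw [hcast]; ring
        rw [harg] at h2
        rw [habs]
        linarith
      · -- k > 0
        set m : ℕ := k.toNat with hm
        have hm1 : 1 ≤ m := by omega
        have hcast : ((m : ℕ) : ℝ) = (k : ℝ) := by exact_mod_cast (show (m : ℤ) = k by omega)
        have h2 := hgp m hm1
        rw [hsum_pos m ω] at h2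
        have habs : |p * (k : ℝ)| = p * (m : ℝ) := by
          rw [abs_of_nonneg (by nlinarith [hcast, show (1:ℝ) ≤ (m:ℝ) by exact_mod_cast hm1])]
          rw [hcast]
        have hpm : p * ((m : ℕ) : ℝ) = p * ((k : ℤ) : ℝ) := by rw [hcast]
        have hWeq : W (p * ((m : ℕ) : ℝ)) ω = W (p * ((k : ℤ) : ℝ)) ω := by rw [hpm]
        rw [habs]
        linarith
    have hTset : {t : ℝ | (∃ k : ℤ, t = p * k) ∧
        ∀ s : ℤ, W (p * s) ω - |p * s| / 2 ≤ W t ω - |t| / 2} = {0} := by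
      apply Set.eq_singleton_iff_unique_mem.mpr
      constructor
      · refine ⟨⟨0, by norm_num⟩, ?_⟩
        intro s
        have h0 : W (0 : ℝ) ω - |(0 : ℝ)| / 2 = 0 := by norm_num [hBM.start ω]
        rw [h0]
        rcases eq_or_ne s 0 with rfl | hs
        · norm_num [hBM.start ω]
        · exact (key1 s hs).le
      · rintro t ⟨⟨k, rfl⟩, hmax⟩
        rcases eq_or_ne k 0 with rfl | hk
        · norm_num
        · exfalso
          have h00 := hmax 0
          norm_num [hBM.start ω] at h00
          have := key1 k hk
          linarith [abs_mul p (k : ℝ)]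
    rw [Set.mem_setOf_eq, hTset]
    exact csInf_singleton 0
  -- put everything together
  have hexp1 : Real.exp (-p / 2) < 1 := by
    rw [show (1:ℝ) = Real.exp 0 by rw [Real.exp_zero]]
    exact Real.exp_lt_exp.mpr (by linarith)
  calc ENNReal.ofReal ((1 / 4) * (1 - Real.exp (-p / 2)) ^ 2)
      = ENNReal.ofReal (((1 - Real.exp (-p / 2)) / 2) * ((1 - Real.exp (-p / 2)) / 2)) := by
        congr 1; ring
    _ = ENNReal.ofReal ((1 - Real.exp (-p / 2)) / 2)
        * ENNReal.ofReal ((1 - Real.exp (-p / 2)) / 2) :=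
        ENNReal.ofReal_mul (by linarith)
    _ ≤ P Gp * P Gn := mul_le_mul' hGp hGn
    _ = P (Gp ∩ Gn) := hGpGn.symm
    _ ≤ _ := measure_mono hincl
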